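/- For every i ≥ 1, every integer x > 2^{2i} + 2^i + 1 can be written as a non-negative integer linear combination of the numbers 2^j + 1 for i ≤ j ≤ 2i; consequently, the Frobenius number of the set {2^j + 1 : j ≥ i} equals 2^{2i} + 2^i + 1. -/

import Mathlib

/-- Binary-expansion style decomposition of `R` into powers of two, each at most `R`,
with a good bound on the number of summands. -/
lemma frob_aux_bits : ∀ R : ℕ, ∃ M : Multiset ℕ,
    (M.map (fun k => 2 ^ k)).sum = R ∧ (∀ k ∈ M, 2 ^ k ≤ R) ∧
    Multiset.card M ≤ R ∧ (2 ≤ R → Multiset.card M < R) := by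
  intro R
  induction R using Nat.strong_induction_on with
  | _ R ih =>
    match R with
    | 0 => exact ⟨0, by simp⟩
    | 1 => exact ⟨{0}, by simp⟩
    | (n + 2) =>
      set R := n + 2 with hR
      have hR2 : 2 ≤ R := by omega
      set k := Nat.log 2 R with hkdef
      have hk1 : 2 ^ k ≤ R := Nat.pow_log_le_self 2 (by omega)
      have hk2 : 2 ≤ 2 ^ k := by
        have : 1 ≤ k := Nat.le_log_of_pow_le (by norm_num) (by omega)
        calc 2 = 2 ^ 1 := by norm_num
        _ ≤ 2 ^ k := Nat.pow_le_pow_right (by norm_num) this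
      obtain ⟨M', hs, hb, hc, _⟩ := ih (R - 2 ^ k) (by omega)
      refine ⟨k ::ₘ M', ?_, ?_, ?_, ?_⟩
      · rw [Multiset.map_cons, Multiset.sum_cons, hs]; omega
      · intro j hj
        rcases Multiset.mem_cons.mp hj with h | h
        · subst h; exact hk1
        · have := hb j h; omega
      · rw [Multiset.card_cons]; omega
      · intro _; rw [Multiset.card_cons]; omega

/-- Splitting powers of two: we can increase the number of summands one at a time,
up to the total sum, keeping exponents `≤ i`. -/
lemma frob_aux_split (i : ℕ) : ∀ d : ℕ, ∀ M : Multiset ℕ, (∀ k ∈ M, k ≤ i) →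
    Multiset.card M + d ≤ (M.map (fun k => 2 ^ k)).sum →
    ∃ M' : Multiset ℕ, (∀ k ∈ M', k ≤ i) ∧
      (M'.map (fun k => 2 ^ k)).sum = (M.map (fun k => 2 ^ k)).sum ∧
      Multiset.card M' = Multiset.card M + d := by
  intro d
  induction d with
  | zero => exact fun M h _ => ⟨M, h, rfl, rfl⟩
  | succ d ih =>
    intro M hM hcard
    have hex : ∃ k ∈ M, k ≠ 0 := by
      by_contra h
      push_neg at h
      have hmap : M.map (fun k => 2 ^ k) = M.map (fun _ => 1) := by
        apply Multiset.map_congr rfl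
        intro k hk
        simp [h k hk]
      rw [hmap] at hcard
      rw [Multiset.map_const', Multiset.sum_replicate, smul_eq_mul, mul_one] at hcard
      omega
    obtain ⟨k, hkM, hk0⟩ := hex
    have hce : (k ::ₘ M.erase k) = M := Multiset.cons_erase hkM
    set M₁ : Multiset ℕ := (k - 1) ::ₘ (k - 1) ::ₘ M.erase k with hM₁
    have hpow : 2 ^ (k - 1) + 2 ^ (k - 1) = 2 ^ k := by
      rw [← two_mul, ← pow_succ']
      congr 1
      omega
    have hsum1 : (M₁.map (fun k => 2 ^ k)).sum = (M.map (fun k => 2 ^ k)).sum := by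
      rw [← hce, hM₁]
      simp only [Multiset.map_cons, Multiset.sum_cons]
      omega
    have hcard1 : Multiset.card M₁ = Multiset.card M + 1 := by
      rw [← hce, hM₁]
      simp
    have helem1 : ∀ j ∈ M₁, j ≤ i := by
      intro j hj
      rw [hM₁] at hj
      rcases Multiset.mem_cons.mp hj with h | h
      · have := hM k hkM; omega
      · rcases Multiset.mem_cons.mp h with h' | h'
        · have := hM k hkM; omega
        · exact hM j (Multiset.mem_of_mem_erase h')
    obtain ⟨M', h1, h2, h3⟩ := ih M₁ helem1 (by omega)
    exact ⟨M', h1, by omega, by omega⟩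

/-- Every `x` larger than `2^(2i) + 2^i + 1` is a sum of numbers `2^(i+k)+1` with `k ≤ i`. -/
lemma frob_aux_rep (i x : ℕ) (hi : 1 ≤ i) (hx : 2 ^ (2 * i) + 2 ^ i + 1 < x) :
    ∃ M : Multiset ℕ, (∀ k ∈ M, k ≤ i) ∧
      (M.map (fun k => 2 ^ (i + k) + 1)).sum = x := by
  set P := 2 ^ i with hPdef
  have hP2 : 2 ≤ P := by
    calc 2 = 2 ^ 1 := by norm_num
    _ ≤ 2 ^ i := Nat.pow_le_pow_right (by norm_num) hi
  have h2i : 2 ^ (2 * i) = P * P := by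
    rw [two_mul, pow_add]
  rw [h2i] at hx
  set q := (x + P) / (P + 1) with hqdef
  set r := (x + P) % (P + 1) with hrdef
  have hmod : (P + 1) * q + r = x + P := Nat.div_add_mod _ _
  have hrlt : r < P + 1 := Nat.mod_lt _ (by omega)
  set ρ := P - r with hρdef
  have hq : (P + 1) * q = x + ρ := by omega
  have hqge : P + 1 ≤ q := by
    by_contra h
    push_neg at h
    have : (P + 1) * q ≤ (P + 1) * P := Nat.mul_le_mul_left _ (by omega)
    have hPP : (P + 1) * P = P * P + P := by ring
    omega
  set Q := q / P with hQdef
  set R := q % P with hRdef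
  have hQR : P * Q + R = q := Nat.div_add_mod _ _
  have hRlt : R < P := Nat.mod_lt _ (by omega)
  have hQ1 : 1 ≤ Q := by
    rcases Nat.eq_zero_or_pos Q with h | h
    · rw [h] at hQR; omega
    · exact h
  obtain ⟨Mr, hMrsum, hMrpow, hMrcard, hMrcard2⟩ := frob_aux_bits R
  have hMrle : ∀ k ∈ Mr, k ≤ i := by
    intro k hk
    have h1 : 2 ^ k ≤ R := hMrpow k hk
    have h2 : 2 ^ k < 2 ^ i := by omega
    have := (Nat.pow_lt_pow_iff_right (by norm_num : 1 < 2)).mp h2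
    omega
  set b := Multiset.card Mr with hbdef
  -- key counting inequality
  have hkey : Q + b + ρ ≤ q := by
    by_cases hQ2 : 2 ≤ Q
    · have h1 : Q + P ≤ P * Q := by nlinarith
      omega
    · have hQe : Q = 1 := by omega
      rw [hQe, mul_one] at hQR
      by_cases hR2 : 2 ≤ R
      · have := hMrcard2 hR2
        omega
      · -- R ≤ 1, q = P + R, q ≥ P + 1 so R = 1, q = P + 1
        have hRe : R = 1 := by omega
        have hqe : q = P + 1 := by omega
        have hρ : ρ ≤ P - 1 := by
          have hexp : (P + 1) * (P + 1) = P * P + 2 * P + 1 := by ring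
          rw [hqe] at hq
          omega
        omega
  set M₀ : Multiset ℕ := Multiset.replicate Q i + Mr with hM₀
  have hM₀le : ∀ k ∈ M₀, k ≤ i := by
    intro k hk
    rw [hM₀, Multiset.mem_add] at hk
    rcases hk with h | h
    · rw [Multiset.eq_of_mem_replicate h]
    · exact hMrle k h
  have hM₀sum : (M₀.map (fun k => 2 ^ k)).sum = q := by
    rw [hM₀, Multiset.map_add, Multiset.sum_add, Multiset.map_replicate,
      Multiset.sum_replicate, smul_eq_mul, hMrsum]
    have : Q * 2 ^ i = P * Q := by rw [hPdef]; ring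
    omega
  have hM₀card : Multiset.card M₀ = Q + b := by
    rw [hM₀]; simp [hbdef]
  set m := q - ρ with hmdef
  have hρq : ρ ≤ q := by omega
  obtain ⟨M, hMle, hMsum, hMcard⟩ := frob_aux_split i (m - Multiset.card M₀) M₀ hM₀le
    (by rw [hM₀sum, hM₀card]; omega)
  rw [hM₀sum] at hMsum
  rw [hM₀card] at hMcard
  have hMcard' : Multiset.card M = m := by omega
  refine ⟨M, hMle, ?_⟩
  have hfun : (M.map (fun k => 2 ^ (i + k) + 1)).sum
      = (M.map (fun k => P * 2 ^ k)).sum + (M.map (fun _ => 1)).sum := by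
    rw [← Multiset.sum_map_add]
    apply congrArg
    apply Multiset.map_congr rfl
    intro k _
    rw [hPdef, ← pow_add]
  rw [hfun, Multiset.sum_map_mul_left, hMsum, Multiset.map_const', Multiset.sum_replicate,
    smul_eq_mul, mul_one, hMcard']
  have hsplit : (P + 1) * q = P * q + q := by ring
  omega

/-- Structure of sums of elements `2^j+1` with `i ≤ j ≤ 2i`. -/
lemma frob_aux_form (i : ℕ) : ∀ L : Multiset ℕ,
    (∀ y ∈ L, ∃ j, i ≤ j ∧ j ≤ 2 * i ∧ y = 2 ^ j + 1) →
    ∃ T, L.sum = Multiset.card L + T ∧ 2 ^ i ∣ T ∧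
      2 ^ i * Multiset.card L ≤ T ∧ T ≤ 2 ^ (2 * i) * Multiset.card L := by
  intro L
  induction L using Multiset.induction with
  | empty => exact fun _ => ⟨0, by simp⟩
  | cons y L ih =>
    intro h
    obtain ⟨T, hT, hdvd, h1, h2⟩ := ih (fun z hz => h z (Multiset.mem_cons_of_mem hz))
    obtain ⟨j, hj1, hj2, hy⟩ := h y (Multiset.mem_cons_self y L)
    have hji : 2 ^ i ≤ 2 ^ j := Nat.pow_le_pow_right (by norm_num) hj1
    have hj2i : 2 ^ j ≤ 2 ^ (2 * i) := Nat.pow_le_pow_right (by norm_num) hj2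
    refine ⟨2 ^ j + T, ?_, ?_, ?_, ?_⟩
    · rw [Multiset.sum_cons, Multiset.card_cons, hy]; omega
    · exact dvd_add (pow_dvd_pow 2 hj1) hdvd
    · rw [Multiset.card_cons, Nat.mul_succ]; omega
    · rw [Multiset.card_cons, Nat.mul_succ]; omega

/-- `2^(2i) + 2^i + 1` is not representable. -/
lemma frob_aux_not_mem (i : ℕ) (hi : 1 ≤ i) :
    2 ^ (2 * i) + 2 ^ i + 1 ∉
      AddSubmonoid.closure {y : ℕ | ∃ j, i ≤ j ∧ y = 2 ^ j + 1} := by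
  intro hmem
  set N := 2 ^ (2 * i) + 2 ^ i + 1 with hNdef
  obtain ⟨L, hL, hsum⟩ := AddSubmonoid.exists_multiset_of_mem_closure hmem
  set P := 2 ^ i with hPdef
  have hP2 : 2 ≤ P := by
    calc 2 = 2 ^ 1 := by norm_num
    _ ≤ 2 ^ i := Nat.pow_le_pow_right (by norm_num) hi
  have h2i : 2 ^ (2 * i) = P * P := by rw [two_mul, pow_add]
  have hL' : ∀ y ∈ L, ∃ j, i ≤ j ∧ j ≤ 2 * i ∧ y = 2 ^ j + 1 := by
    intro y hy
    obtain ⟨j, hj, hyj⟩ := hL y hy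
    refine ⟨j, hj, ?_, hyj⟩
    by_contra h
    push_neg at h
    have hylesum : y ≤ L.sum := Multiset.single_le_sum (fun z _ => Nat.zero_le z) y hy
    have h21 : 2 ^ (2 * i + 1) ≤ 2 ^ j := Nat.pow_le_pow_right (by norm_num) (by omega)
    have h22 : 2 ^ (2 * i + 1) = P * P * 2 := by rw [pow_succ, h2i]
    have hPlt : P < P * P := by nlinarith
    rw [hsum, hNdef, h2i] at hylesum
    rw [hyj] at hylesum
    omega
  obtain ⟨T, hT, hdvd, h1, h2⟩ := frob_aux_form i L hL'
  rw [← hPdef] at h1 hdvd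
  set m := Multiset.card L with hmdef
  rw [hsum, hNdef] at hT
  rw [h2i] at h2 hT
  -- first: 2 ≤ m and m ≤ P
  have hm2 : 2 ≤ m := by
    rcases Nat.lt_or_ge m 2 with h | h
    · interval_cases m
      · simp at h2; omega
      · rw [mul_one] at h2; omega
    · exact h
  have hmP : m ≤ P := by
    by_contra h
    push_neg at h
    have : P * (P + 1) ≤ P * m := Nat.mul_le_mul_left _ (by omega)
    have hPP : P * (P + 1) = P * P + P := by ring
    omega
  -- divisibility contradiction
  obtain ⟨c, hc⟩ := hdvd
  rw [hc] at hT h1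
  -- P * c + m = P * P + P + 1  (from hT)
  by_cases hcle : c ≤ P
  · have hsum2 : P * (P + 1 - c) + P * c = P * (P + 1) := by
      rw [← Nat.mul_add]
      congr 1
      omega
    have hge : P * 1 ≤ P * (P + 1 - c) := Nat.mul_le_mul_left _ (by omega)
    have hPP : P * (P + 1) = P * P + P := by ring
    rw [mul_one] at hge
    omega
  · have : P * (P + 1) ≤ P * c := Nat.mul_le_mul_left _ (by omega)
    have hPP : P * (P + 1) = P * P + P := by ring
    omega

theorem frobenius_of_two_pow_plus_one (i : ℕ) (hi : 1 ≤ i) :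
    (∀ x : ℕ, 2 ^ (2 * i) + 2 ^ i + 1 < x →
      x ∈ AddSubmonoid.closure {y : ℕ | ∃ j, i ≤ j ∧ j ≤ 2 * i ∧ y = 2 ^ j + 1}) ∧
    FrobeniusNumber (2 ^ (2 * i) + 2 ^ i + 1) {y : ℕ | ∃ j, i ≤ j ∧ y = 2 ^ j + 1} := by
  have main : ∀ x : ℕ, 2 ^ (2 * i) + 2 ^ i + 1 < x →
      x ∈ AddSubmonoid.closure {y : ℕ | ∃ j, i ≤ j ∧ j ≤ 2 * i ∧ y = 2 ^ j + 1} := by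
    intro x hx
    obtain ⟨M, hM, hsum⟩ := frob_aux_rep i x hi hx
    rw [← hsum]
    refine AddSubmonoid.multiset_sum_mem _ _ ?_
    intro y hy
    obtain ⟨k, hk, rfl⟩ := Multiset.mem_map.mp hy
    exact AddSubmonoid.subset_closure
      ⟨i + k, by omega, by have := hM k hk; omega, rfl⟩
  refine ⟨main, ?_, ?_⟩
  · exact frob_aux_not_mem i hi
  · intro k hk
    by_contra h
    push_neg at h
    apply hk
    have hmem := main k h
    have hsub : {y : ℕ | ∃ j, i ≤ j ∧ j ≤ 2 * i ∧ y = 2 ^ j + 1} ⊆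
        {y : ℕ | ∃ j, i ≤ j ∧ y = 2 ^ j + 1} := by
      rintro y ⟨j, hj1, _, hj3⟩
      exact ⟨j, hj1, hj3⟩
    exact AddSubmonoid.closure_mono hsub hmem
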